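/- arXiv:2604.07479 — 2 statements merged into one kernel-verified Lean document; each statement's English description precedes it below -/
import Mathlib

section
/- Let R be a probability measure and S : Ω → ℝ measurable with 0 < Z := E_R[e^{−S}] < ∞. Among all probability measures P absolutely continuous with respect to R with finite relative entropy, the functional P ↦ E_P[S] + KL(P‖R) is minimized uniquely by P* with dP*/dR = e^{−S}/Z, and the minimum value equals −log Z. -/
open MeasureTheory Real


lemma rnDeriv_ae_one_imp_eq {Ω : Type*} [MeasurableSpace Ω] {P Q : Measure Ω}
    [IsProbabilityMeasure P] [IsProbabilityMeasure Q] (hPQ : P ≪ Q)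
    (h1 : P.rnDeriv Q =ᵐ[P] 1) : P = Q := by
  set A := {x | P.rnDeriv Q x = 1} with hA
  have hAm : MeasurableSet A := Measure.measurable_rnDeriv P Q (measurableSet_singleton 1)
  have hPc : P Aᶜ = 0 := by
    have := h1
    rw [Filter.EventuallyEq, ae_iff] at this
    simpa [A, Set.compl_setOf] using this
  have hPw : Q.withDensity (P.rnDeriv Q) = P := Measure.withDensity_rnDeriv_eq P Q hPQ
  have hQc0 : ∫⁻ x in Aᶜ, P.rnDeriv Q x ∂Q = 0 := by
    rw [← withDensity_apply _ hAm.compl, hPw]; exact hPc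
  have hQA : ∫⁻ x in A, P.rnDeriv Q x ∂Q = Q A := by
    rw [setLIntegral_congr_fun hAm (fun x hx => (hx : P.rnDeriv Q x = 1))]
    simp
  have huniv : (1 : ENNReal) = Q A := by
    have h2 : ∫⁻ x, P.rnDeriv Q x ∂Q = P Set.univ := Measure.lintegral_rnDeriv hPQ
    rw [measure_univ] at h2
    rw [← h2, ← lintegral_add_compl _ hAm, hQA, hQc0, add_zero]
  have hQc : Q Aᶜ = 0 := by
    rw [measure_compl hAm (measure_ne_top _ _), measure_univ, ← huniv, tsub_self]
  have hQ1 : P.rnDeriv Q =ᵐ[Q] 1 := by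
    rw [Filter.EventuallyEq, ae_iff]
    simpa [A, Set.compl_setOf] using hQc
  calc P = Q.withDensity (P.rnDeriv Q) := hPw.symm
    _ = Q.withDensity 1 := withDensity_congr_ae hQ1
    _ = Q := withDensity_one

lemma gibbs_key {Ω : Type*} [MeasurableSpace Ω] {P Q : Measure Ω}
    [IsProbabilityMeasure P] [IsProbabilityMeasure Q] (hPQ : P ≪ Q)
    (h_int : Integrable (llr P Q) P) :
    0 ≤ ∫ x, llr P Q x ∂P ∧ (∫ x, llr P Q x ∂P = 0 → P = Q) := by
  set I := ∫ x, llr P Q x ∂P with hI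
  have h_exp : (fun x ↦ exp (-llr P Q x)) =ᵐ[P] fun x ↦ (Q.rnDeriv P x).toReal :=
    exp_neg_llr hPQ
  have h_int_exp : Integrable (fun x ↦ exp (-llr P Q x)) P :=
    Measure.integrable_toReal_rnDeriv.congr h_exp.symm
  have h_le_one : ∫ x, exp (-llr P Q x) ∂P ≤ 1 := by
    rw [integral_congr_ae h_exp]
    calc ∫ x, (Q.rnDeriv P x).toReal ∂P ≤ (Q Set.univ).toReal := by
          rw [← setIntegral_univ]
          exact Measure.setIntegral_toReal_rnDeriv_le (measure_ne_top Q _)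
      _ = 1 := by simp
  have havg : ⨍ x, -llr P Q x ∂P = -I := by
    rw [average_eq_integral, integral_neg]
  have h_jensen := strictConvexOn_exp.ae_eq_const_or_map_average_lt
    continuous_exp.continuousOn isClosed_univ
    (Filter.Eventually.of_forall fun x => Set.mem_univ _) h_int.neg
    (h_int_exp : Integrable (exp ∘ fun x => -llr P Q x) P)
  simp only [Pi.neg_apply] at h_jensen
  rcases h_jensen with h_const | h_lt
  · rw [havg] at h_const
    have hc' : (fun x => exp (-llr P Q x)) =ᵐ[P] fun _ => exp (-I) := by
      filter_upwards [h_const] with x hx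
      rw [Pi.neg_apply] at hx
      rw [hx, Function.const_apply]
    have hc : ∫ x, exp (-llr P Q x) ∂P = exp (-I) := by
      rw [integral_congr_ae hc']; simp
    have hIpos : 0 ≤ I := by
      rw [hc] at h_le_one
      have := Real.exp_le_one_iff.mp h_le_one
      linarith
    refine ⟨hIpos, fun hI0 => ?_⟩
    have h1 : P.rnDeriv Q =ᵐ[P] 1 := by
      filter_upwards [h_const, Measure.rnDeriv_pos hPQ,
        hPQ.ae_le (Measure.rnDeriv_lt_top P Q)] with x hx hpos hlt
      simp only [Pi.neg_apply, Function.const_apply, hI0, neg_zero, neg_eq_zero] at hx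
      have hx' : Real.log (P.rnDeriv Q x).toReal = 0 := hx
      have htRpos : 0 < (P.rnDeriv Q x).toReal := ENNReal.toReal_pos hpos.ne' hlt.ne
      have htR : (P.rnDeriv Q x).toReal = 1 := by
        rcases Real.log_eq_zero.mp hx' with h | h | h
        · exact absurd h htRpos.ne'
        · exact h
        · linarith
      simpa using (ENNReal.toReal_eq_one_iff _).mp htR
    exact rnDeriv_ae_one_imp_eq hPQ h1
  · rw [havg] at h_lt
    have : 0 < I := by
      rw [average_eq_integral] at h_lt
      have := h_lt.trans_le h_le_one
      have h2 : -I < 0 := Real.exp_lt_one_iff.mp this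
      linarith
    exact ⟨this.le, fun h0 => absurd h0 this.ne'⟩


/-- Gibbs variational principle: among probability measures `P ≪ R` with
finite relative entropy, `E_P[S] + KL(P‖R)` is uniquely minimized by the
tilted measure `dP*/dR = e^{−S}/Z`, with minimum value `−log Z`,
where `KL(P‖R) = ∫ log(dP/dR) dP`. -/
theorem gibbs_variational_principle {Ω : Type*} [MeasurableSpace Ω]
    (R : Measure Ω) [IsProbabilityMeasure R]
    (S : Ω → ℝ) (hS : Measurable S)
    (hint : Integrable (fun ω => Real.exp (-S ω)) R)
    (Z : ℝ) (hZ : Z = ∫ ω, Real.exp (-S ω) ∂ R) (hZpos : 0 < Z)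
    (Pstar : Measure Ω)
    (hPstar : Pstar = R.withDensity (fun ω => ENNReal.ofReal (Real.exp (-S ω) / Z)))
    (hSstar : Integrable S Pstar)
    (hKLstar : Integrable (fun ω => Real.log (Pstar.rnDeriv R ω).toReal) Pstar) :
    ((∫ ω, S ω ∂Pstar) + ∫ ω, Real.log (Pstar.rnDeriv R ω).toReal ∂Pstar
        = -Real.log Z) ∧
    ∀ (P : Measure Ω), IsProbabilityMeasure P → P ≪ R →
      Integrable S P →
      Integrable (fun ω => Real.log (P.rnDeriv R ω).toReal) P →
      (-Real.log Z
          ≤ (∫ ω, S ω ∂P) + ∫ ω, Real.log (P.rnDeriv R ω).toReal ∂P) ∧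
      ((∫ ω, S ω ∂P) + (∫ ω, Real.log (P.rnDeriv R ω).toReal ∂P)
          = -Real.log Z → P = Pstar) := by
  have hint' : Integrable (fun ω => Real.exp ((fun ω => -S ω) ω)) R := hint
  have hPstar' : Pstar = R.tilted (fun ω => -S ω) := by
    rw [hPstar, Measure.tilted, hZ]
  haveI hPstarProb : IsProbabilityMeasure Pstar := by
    rw [hPstar']; exact isProbabilityMeasure_tilted hint'
  have hPstarR : Pstar ≪ R := by
    rw [hPstar']; exact tilted_absolutelyContinuous R _
  have hRPstar : R ≪ Pstar := by
    rw [hPstar']; exact absolutelyContinuous_tilted hint'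
  have h_log : (fun ω => Real.log (Pstar.rnDeriv R ω).toReal)
      =ᵐ[Pstar] fun ω => -S ω - Real.log Z := by
    have h := log_rnDeriv_tilted_left_self (μ := R) (f := fun ω => -S ω) hint'
    rw [← hPstar', ← hZ] at h
    exact hPstarR.ae_le h
  constructor
  · have hsub := integral_sub hSstar.neg (integrable_const (μ := Pstar) (Real.log Z))
    simp only [Pi.neg_apply] at hsub
    rw [integral_congr_ae h_log, hsub, integral_neg, integral_const]
    simp only [measure_univ, probReal_univ, ENNReal.toReal_one, smul_eq_mul, one_mul]
    ring
  · intro P hPprob hPR hSint hllrR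
    haveI := hPprob
    have hllrR' : Integrable (llr P R) P := hllrR
    have hPPstar : P ≪ Pstar := hPR.trans hRPstar
    have h_int_star : Integrable (llr P Pstar) P := by
      rw [hPstar']
      exact integrable_llr_tilted_right hPR hSint.neg hllrR' hint'
    have h_eq : ∫ x, llr P Pstar x ∂P
        = ∫ x, llr P R x ∂P + ∫ ω, S ω ∂P + Real.log Z := by
      rw [hPstar',
        integral_llr_tilted_right (f := fun ω => -S ω) hPR
          (hSint.neg : Integrable (fun ω => -S ω) P) hint' hllrR', ← hZ, integral_neg]
      ring
    obtain ⟨hge, heq⟩ := gibbs_key hPPstar h_int_star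
    rw [h_eq] at hge heq
    have hllr_eq : ∫ x, llr P R x ∂P
        = ∫ ω, Real.log (P.rnDeriv R ω).toReal ∂P := rfl
    rw [hllr_eq] at hge heq
    constructor
    · linarith
    · intro h0
      exact heq (by linarith)
end

section
/- Let Z¹,…,Zᴺ : [0,T] × ℝⁿ → ℝ be positive C^{1,2} functions, α ∈ ℝ^{N×N} invertible with β = α⁻¹, and define Jⁱ(t,x) = −∑_j α_{ij} log Zʲ(t,x). Suppose each Zⁱ satisfies the linear PDE −∂_t Zⁱ = fᵀ∇_x Zⁱ + (1/2)Tr(G ∇²_x Zⁱ) − (∑_j β_{ij} Cʲ(t,x)) Zⁱ, where f : ℝⁿ → ℝⁿ, G = g gᵀ for g : ℝⁿ → ℝ^{n×m}, and Cʲ are given functions. Then each Jⁱ satisfies the nonlinear PDE −∂_t Jⁱ = Cⁱ(t,x) + fᵀ∇_x Jⁱ + (1/2)Tr(G ∇²_x Jⁱ) − (1/2) ∇𝐉ᵀ (βᵀ ⊗ g) diag_j(α_{ij} I_m) (β ⊗ gᵀ) ∇𝐉, where ∇𝐉 is the stacked gradient (∇_x J¹,…,∇_x Jᴺ). -/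
open Matrix Kronecker InnerProductSpace

section CHhelpers

variable {n N : ℕ}

lemma CH_grad_coord (f : EuclideanSpace ℝ (Fin n) → ℝ) (x : EuclideanSpace ℝ (Fin n)) (b : Fin n) :
    gradient f x b = fderiv ℝ f x (EuclideanSpace.single b 1) := by
  have h : ⟪((toDual ℝ (EuclideanSpace ℝ (Fin n))).symm (fderiv ℝ f x)),
      (EuclideanSpace.single b 1)⟫_ℝ = fderiv ℝ f x (EuclideanSpace.single b 1) :=
    toDual_symm_apply
  rw [gradient, ← h, EuclideanSpace.inner_single_right]
  simp

lemma CH_euclid_sum_apply {M : Type*} [Fintype M] (v : M → EuclideanSpace ℝ (Fin n)) (a : Fin n) :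
    (∑ j, v j) a = ∑ j, v j a := by
  induction (Finset.univ : Finset M) using Finset.cons_induction with
  | empty => rfl
  | cons j s hj ih => rw [Finset.sum_cons, Finset.sum_cons, ← ih]; rfl

lemma CH_hasFDerivAt_logsum (Z : Fin N → EuclideanSpace ℝ (Fin n) → ℝ) (c : Fin N → ℝ)
    (hd : ∀ j, Differentiable ℝ (Z j)) (hpos : ∀ j y, 0 < Z j y)
    (x : EuclideanSpace ℝ (Fin n)) :
    HasFDerivAt (fun y => -∑ j, c j * Real.log (Z j y))
      (∑ j, (-(c j) * (Z j x)⁻¹) • fderiv ℝ (Z j) x) x := by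
  have h : ∀ j : Fin N, HasFDerivAt (fun y => c j * Real.log (Z j y))
      ((c j * (Z j x)⁻¹) • fderiv ℝ (Z j) x) x := by
    intro j
    have h1 : HasFDerivAt (fun y => Real.log (Z j y)) ((Z j x)⁻¹ • fderiv ℝ (Z j) x) x :=
      (Real.hasDerivAt_log (hpos j x).ne').comp_hasFDerivAt x ((hd j x).hasFDerivAt)
    have := h1.const_mul (c j)
    simpa [smul_smul] using this
  have hs := HasFDerivAt.fun_sum (fun j (_ : j ∈ Finset.univ) => h j)
  have hL : (∑ j, (-(c j) * (Z j x)⁻¹) • fderiv ℝ (Z j) x)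
      = -(∑ j : Fin N, (c j * (Z j x)⁻¹) • fderiv ℝ (Z j) x) := by
    rw [← Finset.sum_neg_distrib]
    congr 1; ext j v
    simp [neg_smul, neg_mul]
  rw [hL]
  exact hs.neg

lemma CH_gradient_logsum (Z : Fin N → EuclideanSpace ℝ (Fin n) → ℝ) (c : Fin N → ℝ)
    (hd : ∀ j, Differentiable ℝ (Z j)) (hpos : ∀ j y, 0 < Z j y)
    (x : EuclideanSpace ℝ (Fin n)) :
    gradient (fun y => -∑ j, c j * Real.log (Z j y)) x
      = ∑ j, (-(c j) * (Z j x)⁻¹) • gradient (Z j) x := by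
  have h := (CH_hasFDerivAt_logsum Z c hd hpos x).fderiv
  rw [gradient, h, map_sum]
  congr 1; ext j
  rw [_root_.map_smul]; rfl

lemma CH_diff_gradient (φ : EuclideanSpace ℝ (Fin n) → ℝ) (h : ContDiff ℝ 2 φ) :
    Differentiable ℝ (gradient φ) := by
  have hfd : Differentiable ℝ (fderiv ℝ φ) :=
    (h.fderiv_right (by norm_num : (1:WithTop ℕ∞)+1 ≤ 2)).differentiable one_ne_zero
  have hrep : gradient φ = fun y => ∑ a : Fin n,
      (fderiv ℝ φ y (EuclideanSpace.single a 1)) • (EuclideanSpace.single a 1 :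
        EuclideanSpace ℝ (Fin n)) := by
    funext y; ext a
    rw [CH_euclid_sum_apply, CH_grad_coord]
    simp [EuclideanSpace.single_apply]
  rw [hrep]
  apply Differentiable.fun_sum
  intro a _
  exact (((ContinuousLinearMap.apply ℝ ℝ
    (EuclideanSpace.single a 1 : EuclideanSpace ℝ (Fin n))).differentiable).comp
      hfd).smul_const _

lemma CH_hess_entry (Z : Fin N → EuclideanSpace ℝ (Fin n) → ℝ) (c : Fin N → ℝ)
    (hZ : ∀ j, ContDiff ℝ 2 (Z j)) (hpos : ∀ j y, 0 < Z j y)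
    (x : EuclideanSpace ℝ (Fin n)) (a b : Fin n) :
    fderiv ℝ (gradient (fun y => -∑ j, c j * Real.log (Z j y))) x
        (EuclideanSpace.single b 1) a
      = ∑ j, (c j * ((Z j x)⁻¹)^2 * gradient (Z j) x b * gradient (Z j) x a
           - c j * (Z j x)⁻¹ * fderiv ℝ (gradient (Z j)) x (EuclideanSpace.single b 1) a) := by
  have hd : ∀ j, Differentiable ℝ (Z j) := fun j => (hZ j).differentiable (by norm_num)
  have hfun : gradient (fun y => -∑ j, c j * Real.log (Z j y))
      = fun y => ∑ j, (-(c j) * (Z j y)⁻¹) • gradient (Z j) y :=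
    funext fun y => CH_gradient_logsum Z c hd hpos y
  rw [hfun]
  have hsc : ∀ j : Fin N, HasFDerivAt (fun y => -(c j) * (Z j y)⁻¹)
      ((c j * ((Z j x)^2)⁻¹) • fderiv ℝ (Z j) x) x := by
    intro j
    have h1 : HasFDerivAt (fun y => (Z j y)⁻¹)
        ((-((Z j x)^2)⁻¹) • fderiv ℝ (Z j) x) x :=
      (hasDerivAt_inv (hpos j x).ne').comp_hasFDerivAt x ((hd j x).hasFDerivAt)
    have := h1.const_mul (-(c j))
    have e : (-(c j)) • ((-((Z j x)^2)⁻¹) • fderiv ℝ (Z j) x)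
        = (c j * ((Z j x)^2)⁻¹) • fderiv ℝ (Z j) x := by
      rw [smul_smul]; ring_nf
    rwa [e] at this
  have hG : ∀ j : Fin N, HasFDerivAt (gradient (Z j)) (fderiv ℝ (gradient (Z j)) x) x :=
    fun j => (CH_diff_gradient (Z j) (hZ j) x).hasFDerivAt
  have hterm : ∀ j : Fin N, HasFDerivAt (fun y => (-(c j) * (Z j y)⁻¹) • gradient (Z j) y)
      ((-(c j) * (Z j x)⁻¹) • fderiv ℝ (gradient (Z j)) x
        + ((c j * ((Z j x)^2)⁻¹) • fderiv ℝ (Z j) x).smulRight (gradient (Z j) x)) x :=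
    fun j => (hsc j).smul (hG j)
  have hsum := HasFDerivAt.fun_sum (fun j (_ : j ∈ Finset.univ) => hterm j)
  rw [hsum.fderiv]
  rw [ContinuousLinearMap.sum_apply, CH_euclid_sum_apply]
  congr 1; funext j
  have hcoord : fderiv ℝ (Z j) x (EuclideanSpace.single b 1) = gradient (Z j) x b :=
    (CH_grad_coord (Z j) x b).symm
  simp only [ContinuousLinearMap.add_apply, ContinuousLinearMap.smul_apply,
    ContinuousLinearMap.smulRight_apply, hcoord, PiLp.add_apply, PiLp.smul_apply,
    smul_eq_mul]
  have hzx := (hpos j x).ne'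
  field_simp
  ring

lemma CH_deriv_logsum (ζ : Fin N → ℝ → ℝ) (c : Fin N → ℝ)
    (hd : ∀ j, Differentiable ℝ (ζ j)) (hpos : ∀ j s, 0 < ζ j s) (t : ℝ) :
    deriv (fun s => -∑ j, c j * Real.log (ζ j s)) t
      = -∑ j, c j * ((ζ j t)⁻¹ * deriv (ζ j) t) := by
  have h : ∀ j : Fin N, HasDerivAt (fun s => c j * Real.log (ζ j s))
      (c j * ((ζ j t)⁻¹ * deriv (ζ j) t)) t := by
    intro j
    have h1 : HasDerivAt (fun s => Real.log (ζ j s)) ((ζ j t)⁻¹ * deriv (ζ j) t) t := by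
      have := (Real.hasDerivAt_log (hpos j t).ne').comp t ((hd j t).hasDerivAt)
      exact this
    exact h1.const_mul (c j)
  have hs := HasDerivAt.fun_sum (fun j (_ : j ∈ Finset.univ) => h j)
  exact hs.neg.deriv

end CHhelpers

lemma CH_sum_swap3 {A B C' : Type*} [Fintype A] [Fintype B] [Fintype C']
    (F : A → B → C' → ℝ) :
    ∑ a, ∑ b, ∑ c, F a b c = ∑ c, ∑ a, ∑ b, F a b c := by
  calc ∑ a, ∑ b, ∑ c, F a b c
      = ∑ a, ∑ c, ∑ b, F a b c :=
        Finset.sum_congr rfl fun a _ => Finset.sum_comm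
    _ = ∑ c, ∑ a, ∑ b, F a b c := Finset.sum_comm
/-- Multivariate Cole–Hopf linearization: if the positive functions `Zⁱ`
solve the decoupled linear PDEs
`−∂_t Zⁱ = fᵀ∇_x Zⁱ + (1/2)Tr(g gᵀ ∇²_x Zⁱ) − (∑ j, β i j * Cʲ) Zⁱ`,
then `Jⁱ = −∑ j, α i j * log Zʲ` solve the coupled nonlinear HJB PDEs
`−∂_t Jⁱ = Cⁱ + fᵀ∇_x Jⁱ + (1/2)Tr(g gᵀ ∇²_x Jⁱ)
  − (1/2)∇𝐉ᵀ(βᵀ ⊗ g) diag_j(α i j • I_m)(β ⊗ gᵀ)∇𝐉`,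
where gradients are with respect to `x`, the Hessian matrix of `φ` at `x` has
entries `(∇²φ)_{a b} = fderiv (gradient φ) x (e_b) a`, and `∇𝐉` is the
stacked gradient. -/
theorem multivariate_coleHopf_linearization
    {N n m : ℕ} (T : ℝ) (hT : 0 < T)
    (α β : Matrix (Fin N) (Fin N) ℝ)
    (hαβ : α * β = 1) (hβα : β * α = 1)
    (f : EuclideanSpace ℝ (Fin n) → EuclideanSpace ℝ (Fin n))
    (g : EuclideanSpace ℝ (Fin n) → Matrix (Fin n) (Fin m) ℝ)
    (C : Fin N → ℝ → EuclideanSpace ℝ (Fin n) → ℝ)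
    (Z : Fin N → ℝ → EuclideanSpace ℝ (Fin n) → ℝ)
    (hZpos : ∀ i t x, 0 < Z i t x)
    (hZx : ∀ i t, ContDiff ℝ 2 (Z i t))
    (hZt : ∀ i x, Differentiable ℝ (fun t => Z i t x))
    (hPDE : ∀ i t x, -(deriv (fun s => Z i s x) t)
        = inner ℝ (f x) (gradient (Z i t) x)
          + (1/2) * ((g x * (g x)ᵀ) *
              (Matrix.of fun a b =>
                fderiv ℝ (gradient (Z i t)) x (EuclideanSpace.single b 1) a)).trace
          - (∑ j, β i j * C j t x) * Z i t x)
    (J : Fin N → ℝ → EuclideanSpace ℝ (Fin n) → ℝ)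
    (hJ : ∀ i t x, J i t x = -∑ j, α i j * Real.log (Z j t x)) :
    ∀ i t x, -(deriv (fun s => J i s x) t)
        = C i t x + inner ℝ (f x) (gradient (J i t) x)
          + (1/2) * ((g x * (g x)ᵀ) *
              (Matrix.of fun a b =>
                fderiv ℝ (gradient (J i t)) x (EuclideanSpace.single b 1) a)).trace
          - (1/2) * ((fun p : Fin N × Fin n => gradient (J p.1 t) x p.2) ⬝ᵥ
              ((βᵀ ⊗ₖ g x).mulVec
                (((Matrix.diagonal (fun j => α i j)) ⊗ₖ
                    (1 : Matrix (Fin m) (Fin m) ℝ)).mulVec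
                  ((β ⊗ₖ (g x)ᵀ).mulVec
                    (fun p : Fin N × Fin n => gradient (J p.1 t) x p.2))))) := by
  intro i t x
  have hd2 : ∀ j : Fin N, Differentiable ℝ (Z j t) :=
    fun j => (hZx j t).differentiable (by norm_num)
  have hposx : ∀ (j : Fin N) (y : EuclideanSpace ℝ (Fin n)), 0 < Z j t y :=
    fun j y => hZpos j t y
  -- notation
  set W : Fin N → EuclideanSpace ℝ (Fin n) := fun j => gradient (Z j t) x with hW
  set M : Matrix (Fin n) (Fin n) ℝ := g x * (g x)ᵀ with hM
  set HZ : Fin N → Fin n → Fin n → ℝ :=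
    fun j a b => fderiv ℝ (gradient (Z j t)) x (EuclideanSpace.single b 1) a with hHZ
  have hzne : ∀ j : Fin N, Z j t x ≠ 0 := fun j => (hZpos j t x).ne'
  -- functional form of J
  have hJfun : ∀ l : Fin N, J l t = fun y => -∑ j, α l j * Real.log (Z j t y) :=
    fun l => funext fun y => hJ l t y
  -- gradients of J rows
  have hgradAll : ∀ l : Fin N,
      gradient (J l t) x = ∑ k, (-(α l k) * (Z k t x)⁻¹) • W k := by
    intro l
    rw [hJfun l]
    exact CH_gradient_logsum (fun j => Z j t) (fun j => α l j) hd2 hposx x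
  have hgc : ∀ (l : Fin N) (b : Fin n),
      gradient (J l t) x b = ∑ k, (-(α l k) * (Z k t x)⁻¹) * W k b := by
    intro l b
    rw [hgradAll l, CH_euclid_sum_apply]
    rfl
  -- (1) time derivative
  have hDt : deriv (fun s => J i s x) t
      = -∑ j, α i j * ((Z j t x)⁻¹ * deriv (fun s => Z j s x) t) := by
    have hfunt : (fun s => J i s x) = fun s => -∑ j, α i j * Real.log (Z j s x) :=
      funext fun s => hJ i s x
    rw [hfunt]
    exact CH_deriv_logsum (fun j s => Z j s x) (fun j => α i j)
      (fun j => hZt j x) (fun j s => hZpos j s x) t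
  -- (2) inner term
  have hinner : (inner ℝ (f x) (gradient (J i t) x) : ℝ)
      = ∑ j, (-(α i j) * (Z j t x)⁻¹) * inner ℝ (f x) (W j) := by
    rw [hgradAll i, inner_sum]
    simp only [real_inner_smul_right]
  -- (3) trace formula
  have htrace : ∀ (H : Fin n → Fin n → ℝ),
      (M * Matrix.of H).trace = ∑ a, ∑ b, M a b * H b a := by
    intro H
    simp [Matrix.trace, Matrix.mul_apply, Matrix.diag]
  -- Hessian entries of J i
  have hhess : ∀ a b : Fin n,
      fderiv ℝ (gradient (J i t)) x (EuclideanSpace.single b 1) a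
        = ∑ j, (α i j * ((Z j t x)⁻¹)^2 * W j b * W j a
            - α i j * (Z j t x)⁻¹ * HZ j a b) := by
    intro a b
    rw [hJfun i]
    exact CH_hess_entry (fun j => Z j t) (fun j => α i j) (fun j => hZx j t) hposx x a b
  -- key collapse: β-weighted sums of gradients of J
  have hone : ∀ (k p : Fin N), (∑ l, β k l * α l p) = if k = p then 1 else 0 := by
    intro k p
    have := congrArg (fun Mm : Matrix (Fin N) (Fin N) ℝ => Mm k p) hβα
    simpa [Matrix.mul_apply, Matrix.one_apply] using this
  have hβJ : ∀ (k : Fin N) (b : Fin n),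
      (∑ l, β k l * gradient (J l t) x b) = -((Z k t x)⁻¹ * W k b) := by
    intro k b
    calc (∑ l, β k l * gradient (J l t) x b)
        = ∑ l, ∑ p, β k l * α l p * (-(Z p t x)⁻¹ * W p b) := by
          refine Finset.sum_congr rfl fun l _ => ?_
          rw [hgc l b, Finset.mul_sum]
          refine Finset.sum_congr rfl fun p _ => ?_
          ring
      _ = ∑ p, (∑ l, β k l * α l p) * (-(Z p t x)⁻¹ * W p b) := by
          rw [Finset.sum_comm]
          refine Finset.sum_congr rfl fun p _ => ?_
          rw [Finset.sum_mul]
      _ = -((Z k t x)⁻¹ * W k b) := by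
          simp [hone, ite_mul, Finset.sum_ite_eq, neg_mul]
  -- abbreviations for the scalar building blocks
  set u : Fin N × Fin n → ℝ := fun p => gradient (J p.1 t) x p.2 with hudef
  set TZ : Fin N → ℝ := fun j => (M * (Matrix.of fun a b =>
      fderiv ℝ (gradient (Z j t)) x (EuclideanSpace.single b 1) a)).trace with hTZdef
  have hTZ : ∀ j : Fin N, TZ j = ∑ a, ∑ b, M a b * HZ j b a := fun j => htrace _
  set Bq : Fin N → ℝ := fun j =>
    ∑ c, (∑ a, g x a c * W j a) * (∑ b, g x b c * W j b) with hBqdef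
  have hB : ∀ j : Fin N, (∑ a, ∑ b, M a b * (W j a * W j b)) = Bq j := by
    intro j
    rw [hBqdef]
    simp_rw [hM, Matrix.mul_apply, Matrix.transpose_apply, Finset.sum_mul, Finset.mul_sum]
    rw [CH_sum_swap3]
    exact Finset.sum_congr rfl fun c _ => Finset.sum_congr rfl fun a _ =>
      Finset.sum_congr rfl fun b _ => by ring
  -- first mulVec: (β ⊗ gᵀ) ∇J
  have hu1 : ∀ (k : Fin N) (c : Fin m), ((β ⊗ₖ (g x)ᵀ).mulVec u) (k, c)
      = -((Z k t x)⁻¹ * ∑ b, g x b c * W k b) := by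
    intro k c
    have e1 : ((β ⊗ₖ (g x)ᵀ).mulVec u) (k, c)
        = ∑ l, ∑ b, β k l * g x b c * u (l, b) := by
      simp [Matrix.mulVec, dotProduct, Fintype.sum_prod_type,
        Matrix.kroneckerMap_apply, Matrix.transpose_apply]
    rw [e1]
    calc ∑ l, ∑ b, β k l * g x b c * u (l, b)
        = ∑ b, g x b c * ∑ l, β k l * u (l, b) := by
          rw [Finset.sum_comm]
          refine Finset.sum_congr rfl fun b _ => ?_
          rw [Finset.mul_sum]
          exact Finset.sum_congr rfl fun l _ => by ring
      _ = ∑ b, g x b c * -((Z k t x)⁻¹ * W k b) := by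
          refine Finset.sum_congr rfl fun b _ => ?_
          rw [show (∑ l, β k l * u (l, b)) = ∑ l, β k l * gradient (J l t) x b from rfl,
            hβJ k b]
      _ = -((Z k t x)⁻¹ * ∑ b, g x b c * W k b) := by
          rw [Finset.mul_sum, ← Finset.sum_neg_distrib]
          exact Finset.sum_congr rfl fun b _ => by ring
  -- second mulVec: block diagonal scaling
  have hu2 : ∀ (k : Fin N) (c : Fin m),
      ((((Matrix.diagonal (fun j => α i j)) ⊗ₖ (1 : Matrix (Fin m) (Fin m) ℝ)).mulVec
        ((β ⊗ₖ (g x)ᵀ).mulVec u)) (k, c))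
      = α i k * -((Z k t x)⁻¹ * ∑ b, g x b c * W k b) := by
    intro k c
    have e1 : ((((Matrix.diagonal (fun j => α i j)) ⊗ₖ (1 : Matrix (Fin m) (Fin m) ℝ)).mulVec
        ((β ⊗ₖ (g x)ᵀ).mulVec u)) (k, c))
        = ∑ l, ∑ c', (if k = l then α i k else 0) * (if c = c' then 1 else 0)
            * ((β ⊗ₖ (g x)ᵀ).mulVec u) (l, c') := by
      simp [Matrix.mulVec, dotProduct, Fintype.sum_prod_type,
        Matrix.kroneckerMap_apply, Matrix.diagonal_apply, Matrix.one_apply]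
    rw [e1]
    simp [ite_mul, mul_ite, Finset.sum_ite_eq]
    rw [hu1 k c]
    ring
  -- vecMul of ∇J with (βᵀ ⊗ g)
  have hvm : ∀ (k : Fin N) (c : Fin m),
      (Matrix.vecMul u (βᵀ ⊗ₖ g x)) (k, c)
        = -((Z k t x)⁻¹ * ∑ a, g x a c * W k a) := by
    intro k c
    have e1 : (Matrix.vecMul u (βᵀ ⊗ₖ g x)) (k, c)
        = ∑ l, ∑ a, u (l, a) * (β k l * g x a c) := by
      simp [Matrix.vecMul, dotProduct, Fintype.sum_prod_type,
        Matrix.kroneckerMap_apply, Matrix.transpose_apply]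
    rw [e1]
    calc ∑ l, ∑ a, u (l, a) * (β k l * g x a c)
        = ∑ a, g x a c * ∑ l, β k l * u (l, a) := by
          rw [Finset.sum_comm]
          refine Finset.sum_congr rfl fun a _ => ?_
          rw [Finset.mul_sum]
          exact Finset.sum_congr rfl fun l _ => by ring
      _ = ∑ a, g x a c * -((Z k t x)⁻¹ * W k a) := by
          refine Finset.sum_congr rfl fun a _ => ?_
          rw [show (∑ l, β k l * u (l, a)) = ∑ l, β k l * gradient (J l t) x a from rfl,
            hβJ k a]
      _ = -((Z k t x)⁻¹ * ∑ a, g x a c * W k a) := by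
          rw [Finset.mul_sum, ← Finset.sum_neg_distrib]
          exact Finset.sum_congr rfl fun a _ => by ring
  -- the quadratic form
  have hQ : (u ⬝ᵥ ((βᵀ ⊗ₖ g x).mulVec
        ((((Matrix.diagonal (fun j => α i j)) ⊗ₖ (1 : Matrix (Fin m) (Fin m) ℝ)).mulVec
          ((β ⊗ₖ (g x)ᵀ).mulVec u)))))
      = ∑ k, α i k * (((Z k t x)⁻¹)^2 * Bq k) := by
    rw [Matrix.dotProduct_mulVec]
    have e1 : (Matrix.vecMul u (βᵀ ⊗ₖ g x)) ⬝ᵥ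
        ((((Matrix.diagonal (fun j => α i j)) ⊗ₖ (1 : Matrix (Fin m) (Fin m) ℝ)).mulVec
          ((β ⊗ₖ (g x)ᵀ).mulVec u)))
        = ∑ k, ∑ c, (Matrix.vecMul u (βᵀ ⊗ₖ g x)) (k, c) *
            ((((Matrix.diagonal (fun j => α i j)) ⊗ₖ (1 : Matrix (Fin m) (Fin m) ℝ)).mulVec
              ((β ⊗ₖ (g x)ᵀ).mulVec u)) (k, c)) := by
      simp [dotProduct, Fintype.sum_prod_type]
    rw [e1]
    refine Finset.sum_congr rfl fun k _ => ?_
    rw [hBqdef]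
    rw [Finset.mul_sum, Finset.mul_sum]
    refine Finset.sum_congr rfl fun c _ => ?_
    rw [hvm k c, hu2 k c]
    ring
  -- the Hessian-trace of J i
  have hTrJ : (M * (Matrix.of fun a b =>
        fderiv ℝ (gradient (J i t)) x (EuclideanSpace.single b 1) a)).trace
      = (∑ j, α i j * (((Z j t x)⁻¹)^2 * Bq j)) - ∑ j, α i j * (Z j t x)⁻¹ * TZ j := by
    rw [htrace]
    simp_rw [hhess, Finset.mul_sum]
    rw [CH_sum_swap3]
    rw [← Finset.sum_sub_distrib]
    refine Finset.sum_congr rfl fun j _ => ?_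
    have e2 : ∑ a, ∑ b, (M a b * (α i j * ((Z j t x)⁻¹)^2 * W j a * W j b
          - α i j * (Z j t x)⁻¹ * HZ j b a))
        = α i j * ((Z j t x)⁻¹)^2 * (∑ a, ∑ b, M a b * (W j a * W j b))
          - α i j * (Z j t x)⁻¹ * (∑ a, ∑ b, M a b * HZ j b a) := by
      rw [Finset.mul_sum, Finset.mul_sum, ← Finset.sum_sub_distrib]
      refine Finset.sum_congr rfl fun a _ => ?_
      rw [Finset.mul_sum, Finset.mul_sum, ← Finset.sum_sub_distrib]
      exact Finset.sum_congr rfl fun b _ => by ring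
    rw [e2, hB j, ← hTZ j]
    ring
  -- PDE rearranged
  have hdZ : ∀ j : Fin N, deriv (fun s => Z j s x) t
      = -(inner ℝ (f x) (W j) + (1/2) * TZ j - (∑ k, β j k * C k t x) * Z j t x) := by
    intro j
    have h := hPDE j t x
    rw [← hM] at h
    rw [hTZdef]
    simp only []
    linarith [h]
  -- the α-β contraction producing C i
  have honeαβ : ∀ (k : Fin N), (∑ j, α i j * β j k) = if i = k then 1 else 0 := by
    intro k
    have := congrArg (fun Mm : Matrix (Fin N) (Fin N) ℝ => Mm i k) hαβ
    simpa [Matrix.mul_apply, Matrix.one_apply] using this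
  have hCi : ∑ j, α i j * (∑ k, β j k * C k t x) = C i t x := by
    have e1 : ∑ j, α i j * (∑ k, β j k * C k t x)
        = ∑ k, ∑ j, α i j * β j k * C k t x := by
      simp_rw [Finset.mul_sum]
      rw [Finset.sum_comm]
      exact Finset.sum_congr rfl fun k _ => Finset.sum_congr rfl fun j _ => by ring
    rw [e1]
    calc ∑ k, ∑ j, α i j * β j k * C k t x
        = ∑ k, (∑ j, α i j * β j k) * C k t x := by
          exact Finset.sum_congr rfl fun k _ => by rw [Finset.sum_mul]
      _ = C i t x := by simp [honeαβ, ite_mul, Finset.sum_ite_eq]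
  -- final assembly
  rw [hDt, neg_neg, hinner, hTrJ]
  rw [show ((fun p : Fin N × Fin n => gradient (J p.1 t) x p.2) ⬝ᵥ
        ((βᵀ ⊗ₖ g x).mulVec
          (((Matrix.diagonal (fun j => α i j)) ⊗ₖ (1 : Matrix (Fin m) (Fin m) ℝ)).mulVec
            ((β ⊗ₖ (g x)ᵀ).mulVec (fun p : Fin N × Fin n => gradient (J p.1 t) x p.2)))))
      = ∑ k, α i k * (((Z k t x)⁻¹)^2 * Bq k) from hQ]
  have hLHS : ∑ j, α i j * ((Z j t x)⁻¹ * deriv (fun s => Z j s x) t)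
      = (∑ j, (-(α i j) * (Z j t x)⁻¹) * inner ℝ (f x) (W j))
        - (1/2) * (∑ j, α i j * (Z j t x)⁻¹ * TZ j) + C i t x := by
    calc ∑ j, α i j * ((Z j t x)⁻¹ * deriv (fun s => Z j s x) t)
        = ∑ j, ((-(α i j) * (Z j t x)⁻¹) * inner ℝ (f x) (W j)
            - (1/2) * (α i j * (Z j t x)⁻¹ * TZ j)
            + α i j * (∑ k, β j k * C k t x)) := by
          refine Finset.sum_congr rfl fun j _ => ?_
          rw [hdZ j]
          have hz := hzne j
          field_simp
          ring
      _ = _ := by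
          rw [Finset.sum_add_distrib, Finset.sum_sub_distrib, hCi, Finset.mul_sum]
  rw [hLHS]
  ring
end
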